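/- For every nonempty word a over {0,1}, the set P_a = {code(aⁿ) ++ 0010 : n ≥ 1} is a prefix code, and no element of P_a contains 11 (two consecutive 1s) as a factor (contiguous subword, i.e., infix). -/
import Mathlib

def code (x : List Bool) : List Bool := x.flatMap (fun b => [false, b])

def IsPrefixCode (P : Set (List Bool)) : Prop :=
  ∀ p ∈ P, ∀ q ∈ P, p <+: q → p = q

def Pa (a : List Bool) : Set (List Bool) :=
  {y | ∃ n : ℕ, 1 ≤ n ∧ y = code ((List.replicate n a).flatten) ++ [false, false, true, false]}

lemma code_cons (b : Bool) (w : List Bool) : code (b :: w) = false :: b :: code w := rfl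

lemma code_head (w t : List Bool) : (code w ++ false :: t).head? = some false := by
  cases w <;> rfl

lemma code_append (x y : List Bool) : code (x ++ y) = code x ++ code y := by
  simp [code]

lemma code_length (x : List Bool) : (code x).length = 2 * x.length := by
  induction x with
  | nil => rfl
  | cons b w ih => simp [code_cons, ih]; ring

lemma rep_len (n : ℕ) (a : List Bool) :
    ((List.replicate n a).flatten).length = n * a.length := by
  induction n with
  | zero => simp
  | succ k ih => simp [List.replicate_succ, ih]; ring

lemma no11 (w : List Bool) : ¬ [true, true] <:+: code w ++ [false, false, true, false] := by
  induction w with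
  | nil => decide
  | cons b w ih =>
    rw [code_cons]
    intro h
    rcases List.infix_cons_iff.mp h with hp | h
    · obtain ⟨s, hs⟩ := hp
      simp at hs
    rcases List.infix_cons_iff.mp h with hp | h
    · obtain ⟨s, hs⟩ := hp
      have h2 : true :: s = code w ++ [false, false, true, false] := by
        have := congrArg List.tail hs
        simpa using this
      have h3 := code_head w [false, true, false]
      rw [← h2] at h3
      simp at h3
    · exact ih h

/-- For every nonempty word `a`, the set `P_a = {code(aⁿ) ++ 0010 : n ≥ 1}` is a
prefix code and no element of `P_a` contains `11` as a factor (infix). -/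
theorem Pa_prefixCode_no11 (a : List Bool) (ha : a ≠ []) :
    IsPrefixCode (Pa a) ∧ ∀ y ∈ Pa a, ¬ [true, true] <:+: y := by
  constructor
  · rintro p ⟨n, hn, rfl⟩ q ⟨m, hm, rfl⟩ hpq
    have ha1 : 0 < a.length := List.length_pos_iff.mpr ha
    have hlen := hpq.length_le
    simp only [List.length_append, code_length, rep_len] at hlen
    have hnm : n ≤ m := by
      have : n * a.length ≤ m * a.length := by omega
      exact Nat.le_of_mul_le_mul_right this ha1
    rcases Nat.eq_or_lt_of_le hnm with h | h
    · rw [h]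
    · exfalso
      obtain ⟨d, rfl⟩ : ∃ d, m = n + (d + 1) := ⟨m - n - 1, by omega⟩
      rw [show n + (d + 1) = n + (d + 1) from rfl, List.replicate_add,
        List.flatten_append, code_append, List.append_assoc] at hpq
      have hpre : [false, false, true, false] <+:
          code ((List.replicate (d + 1) a).flatten) ++ [false, false, true, false] :=
        (List.prefix_append_right_inj _).mp hpq
      have hne : (List.replicate (d + 1) a).flatten ≠ [] := by
        rw [List.replicate_succ, List.flatten_cons]
        simp [ha]
      obtain ⟨b, w', hbw⟩ := List.exists_cons_of_ne_nil hne
      rw [hbw, code_cons] at hpre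
      obtain ⟨s, hs⟩ := hpre
      have h2 : true :: false :: s = code w' ++ [false, false, true, false] := by
        have := congrArg (List.tail ∘ List.tail) hs
        simpa using this
      have h3 := code_head w' [false, true, false]
      rw [← h2] at h3
      simp at h3
  · rintro y ⟨n, hn, rfl⟩
    exact no11 _
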